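/- Let k ≥ 4 and let a ≥ 1, a' ≥ 3, b, b' be integers with 0 < b' < b ≤ k−2 and C(k−1,2) + a(k−1) + b = C(k−2,2) + a'(k−2) + b'. Then f(k−1+a) − f(k−2+a) + f(b) − f(b−1) ≥ f(k−2+a') − f(k−3+a') + f(b') − f(b'−1). (Consequently, if h(C(m,k)) ≤ h(C(m,k−1)) and the parameters satisfy 0 < b' < b, then also h(C(m−1,k)) ≤ h(C(m−1,k−1)).) -/

import Mathlib

set_option maxHeartbeats 1000000


/-- `f x = x * log x` (note `Real.log 0 = 0`, so `f 0 = 0`). -/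
noncomputable def f (x : ℝ) : ℝ := x * Real.log x

lemma hasDerivAt_G {x : ℝ} (hx : 1 < x) :
    HasDerivAt (fun t : ℝ => t * Real.log t - (t - 1) * Real.log (t - 1))
      (Real.log x - Real.log (x - 1)) x := by
  have h1 : HasDerivAt (fun t : ℝ => t * Real.log t) (Real.log x + 1) x :=
    Real.hasDerivAt_mul_log (by linarith)
  have h2 : HasDerivAt (fun t : ℝ => (t - 1) * Real.log (t - 1))
      ((Real.log (x - 1) + 1) * 1) x := by
    have inner : HasDerivAt (fun t : ℝ => t - 1) 1 x := (hasDerivAt_id x).sub_const 1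
    exact (Real.hasDerivAt_mul_log (x := x - 1) (by linarith)).comp x inner
  have := h1.sub h2
  have e : Real.log x - Real.log (x - 1) = Real.log x + 1 - (Real.log (x - 1) + 1) * 1 := by ring
  rw [e]
  exact this

/-- Mean value theorem for `g x = f x - f (x-1)`. -/
lemma mvt_g {x y : ℝ} (hx : 1 ≤ x) (hxy : x < y) :
    ∃ c ∈ Set.Ioo x y,
      (f y - f (y - 1)) - (f x - f (x - 1)) = (Real.log c - Real.log (c - 1)) * (y - x) := by
  have hcont : ContinuousOn (fun t : ℝ => t * Real.log t - (t - 1) * Real.log (t - 1))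
      (Set.Icc x y) := by
    apply Continuous.continuousOn
    exact Real.continuous_mul_log.sub
      (Real.continuous_mul_log.comp (continuous_id.sub continuous_const))
  obtain ⟨c, hc, hceq⟩ := exists_hasDerivAt_eq_slope
    (fun t : ℝ => t * Real.log t - (t - 1) * Real.log (t - 1))
    (fun t => Real.log t - Real.log (t - 1)) hxy hcont
    (fun t ht => hasDerivAt_G (by have := ht.1; linarith))
  refine ⟨c, hc, ?_⟩
  rw [eq_div_iff (by linarith : y - x ≠ 0)] at hceq
  simp only [f]
  linarith [hceq]

/-- `log c - log (c-1)` is antitone on `(1, ∞)`. -/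
lemma logdiff_anti {c c' : ℝ} (hc : 1 < c) (hcc' : c ≤ c') :
    Real.log c' - Real.log (c' - 1) ≤ Real.log c - Real.log (c - 1) := by
  have hc1 : (0:ℝ) < c - 1 := by linarith
  have hc'1 : (0:ℝ) < c' - 1 := by linarith
  have h1 : Real.log c' + Real.log (c - 1) ≤ Real.log c + Real.log (c' - 1) := by
    rw [← Real.log_mul (by linarith) (by linarith), ← Real.log_mul (by linarith) (by linarith)]
    apply Real.log_le_log (mul_pos (by linarith) hc1)
    nlinarith
  linarith

/-- `log x - log (x-1) ≤ 1/(x-1)` for `x > 1` (multiplied form). -/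
lemma logdiff_le {x : ℝ} (hx : 1 < x) :
    (Real.log x - Real.log (x - 1)) * (x - 1) ≤ 1 := by
  have hx1 : (0:ℝ) < x - 1 := by linarith
  have hxpos : (0:ℝ) < x := by linarith
  have h := Real.log_le_sub_one_of_pos (x := x / (x - 1)) (by positivity)
  rw [Real.log_div (ne_of_gt hxpos) (ne_of_gt hx1)] at h
  have h2 : x / (x - 1) - 1 = 1 / (x - 1) := by field_simp; ring
  rw [h2] at h
  calc (Real.log x - Real.log (x - 1)) * (x - 1) ≤ (1 / (x - 1)) * (x - 1) :=
        mul_le_mul_of_nonneg_right h (le_of_lt hx1)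
    _ = 1 := by field_simp

/-- `1/x ≤ log x - log (x-1)` for `x > 1` (multiplied form). -/
lemma logdiff_ge {x : ℝ} (hx : 1 < x) :
    1 ≤ (Real.log x - Real.log (x - 1)) * x := by
  have hx1 : (0:ℝ) < x - 1 := by linarith
  have hxpos : (0:ℝ) < x := by linarith
  have h := Real.log_le_sub_one_of_pos (x := (x - 1) / x) (by positivity)
  rw [Real.log_div (ne_of_gt hx1) (ne_of_gt hxpos)] at h
  have h2 : (x - 1) / x - 1 = -(1 / x) := by field_simp; ring
  rw [h2] at h
  have h3 : 1 / x ≤ Real.log x - Real.log (x - 1) := by linarith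
  calc (1:ℝ) = (1 / x) * x := by field_simp
    _ ≤ (Real.log x - Real.log (x - 1)) * x := mul_le_mul_of_nonneg_right h3 (le_of_lt hxpos)

/-- For `k ≥ 4`, `a ≥ 1`, `a' ≥ 3`, `0 < b' < b ≤ k-2` with
`C(k-1,2) + a(k-1) + b = C(k-2,2) + a'(k-2) + b'`:
`f(k-1+a) - f(k-2+a) + f(b) - f(b-1) ≥ f(k-2+a') - f(k-3+a') + f(b') - f(b'-1)`,
comparing the increments `h(C(m,k)) - h(C(m-1,k))` and `h(C(m,k-1)) - h(C(m-1,k-1))`. -/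
theorem increment_comparison_down (k a b a' b' : ℕ) (hk : 4 ≤ k)
    (ha : 1 ≤ a) (ha' : 3 ≤ a') (hb'pos : 0 < b') (hb'b : b' < b) (hb : b ≤ k - 2)
    (hm : (k - 1).choose 2 + a * (k - 1) + b = (k - 2).choose 2 + a' * (k - 2) + b') :
    f ((k : ℝ) - 2 + a') - f ((k : ℝ) - 3 + a') + f b' - f ((b' : ℝ) - 1) ≤
      f ((k : ℝ) - 1 + a) - f ((k : ℝ) - 2 + a) + f b - f ((b : ℝ) - 1) := by
  obtain ⟨n, rfl⟩ : ∃ n, k = n + 4 := ⟨k - 4, by omega⟩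
  -- rewrite the combinatorial constraint
  simp only [show n + 4 - 1 = n + 3 from rfl, show n + 4 - 2 = n + 2 from rfl] at hm hb
  have hchoose : (n + 3).choose 2 = (n + 2) + (n + 2).choose 2 := by
    rw [show n + 3 = (n + 2) + 1 from rfl, Nat.choose_succ_succ]
    simp [Nat.choose_one_right]
  rw [hchoose] at hm
  have hmr : ((n:ℝ) + 2) + (a:ℝ) * ((n:ℝ) + 3) + (b:ℝ) = (a':ℝ) * ((n:ℝ) + 2) + (b':ℝ) := by
    have h := congrArg (fun m : ℕ => (m : ℝ)) hm
    push_cast at h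
    linarith
  -- real variables
  set X : ℝ := (n:ℝ) + 3 + a with hX
  set X' : ℝ := (n:ℝ) + 2 + a' with hX'
  have hb'1 : (1:ℝ) ≤ (b':ℝ) := by exact_mod_cast hb'pos
  have hbb' : (b':ℝ) + 1 ≤ (b:ℝ) := by exact_mod_cast hb'b
  have hbk : (b:ℝ) ≤ (n:ℝ) + 2 := by exact_mod_cast hb
  have ha1 : (1:ℝ) ≤ (a:ℝ) := by exact_mod_cast ha
  have hA : (X' - X) * ((n:ℝ) + 2) = (a:ℝ) + ((b:ℝ) - (b':ℝ)) := by
    rw [hX, hX']; nlinarith [hmr]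
  have hXX' : X < X' := by nlinarith [hA, hbb', ha1]
  have hX1 : (1:ℝ) < X := by rw [hX]; linarith
  -- MVT on [b', b] and [X, X']
  obtain ⟨d, hd, hdeq⟩ := mvt_g (x := (b':ℝ)) (y := (b:ℝ)) hb'1 (by linarith)
  obtain ⟨c, hc, hceq⟩ := mvt_g (x := X) (y := X') (le_of_lt hX1) hXX'
  -- bounds on the log differences
  have hd1 : 1 < d := lt_of_le_of_lt hb'1 hd.1
  have hLD : Real.log ((n:ℝ) + 2) - Real.log ((n:ℝ) + 2 - 1) ≤
      Real.log d - Real.log (d - 1) :=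
    logdiff_anti hd1 (le_trans (le_of_lt hd.2) hbk)
  have hLC : Real.log c - Real.log (c - 1) ≤ Real.log X - Real.log (X - 1) :=
    logdiff_anti hX1 (le_of_lt hc.1)
  have hLK : 1 ≤ (Real.log ((n:ℝ) + 2) - Real.log ((n:ℝ) + 2 - 1)) * ((n:ℝ) + 2) :=
    logdiff_ge (by have := Nat.cast_nonneg (α := ℝ) n; linarith)
  have hLX : (Real.log X - Real.log (X - 1)) * (X - 1) ≤ 1 := logdiff_le hX1
  have hn2 : (0:ℝ) < (n:ℝ) + 2 := by positivity
  have hXm1 : (0:ℝ) < X - 1 := by linarith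
  -- key comparison
  have hDpos : (1:ℝ) ≤ (b:ℝ) - (b':ℝ) := by linarith
  have key : (Real.log c - Real.log (c - 1)) * (X' - X) ≤
      (Real.log d - Real.log (d - 1)) * ((b:ℝ) - (b':ℝ)) := by
    have step1 : (Real.log c - Real.log (c - 1)) * (X' - X) ≤ (X' - X) / (X - 1) := by
      rw [div_eq_mul_one_div, mul_comm (X' - X)]
      apply mul_le_mul_of_nonneg_right _ (by linarith)
      rw [le_div_iff₀ hXm1]
      calc (Real.log c - Real.log (c - 1)) * (X - 1)
          ≤ (Real.log X - Real.log (X - 1)) * (X - 1) :=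
            mul_le_mul_of_nonneg_right hLC (le_of_lt hXm1)
        _ ≤ 1 := hLX
    have step2 : ((b:ℝ) - (b':ℝ)) / ((n:ℝ) + 2) ≤
        (Real.log d - Real.log (d - 1)) * ((b:ℝ) - (b':ℝ)) := by
      rw [div_eq_mul_one_div, mul_comm]
      apply mul_le_mul_of_nonneg_right _ (by linarith)
      rw [div_le_iff₀ hn2]
      calc (1:ℝ) ≤ (Real.log ((n:ℝ) + 2) - Real.log ((n:ℝ) + 2 - 1)) * ((n:ℝ) + 2) := hLK
        _ ≤ (Real.log d - Real.log (d - 1)) * ((n:ℝ) + 2) :=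
            mul_le_mul_of_nonneg_right hLD (le_of_lt hn2)
    have step3 : (X' - X) / (X - 1) ≤ ((b:ℝ) - (b':ℝ)) / ((n:ℝ) + 2) := by
      rw [div_le_div_iff₀ hXm1 hn2]
      have hXeq : X - 1 = (n:ℝ) + 2 + a := by rw [hX]; ring
      nlinarith [hA, hDpos, ha1]
    exact step1.trans (step3.trans step2)
  -- finish: identify the arguments of `f`
  have e1 : ((n + 4 : ℕ) : ℝ) - 2 + (a' : ℝ) = X' := by rw [hX']; push_cast; ring
  have e2 : ((n + 4 : ℕ) : ℝ) - 3 + (a' : ℝ) = X' - 1 := by rw [hX']; push_cast; ring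
  have e3 : ((n + 4 : ℕ) : ℝ) - 1 + (a : ℝ) = X := by rw [hX]; push_cast; ring
  have e4 : ((n + 4 : ℕ) : ℝ) - 2 + (a : ℝ) = X - 1 := by rw [hX]; push_cast; ring
  rw [e1, e2, e3, e4]
  linarith [hdeq, hceq, key]
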